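/- For all integers s, r, q with 1 ≤ s ≤ r and q ≥ 0, the discrete Coulomb-gas sum I_{r,s,q}(α), viewed as a polynomial in the variable α, has lowest-degree term exactly α^{s(s−1)/2} with coefficient 1; that is, the coefficient of α^k in I_{r,s,q}(α) vanishes for all k < s(s−1)/2, and the coefficient of α^{s(s−1)/2} equals 1. Equivalently, the emptiness formation probability F_{r,s,q}(α) = (1−α)^{s(s+q)} α^{−s(s−1)/2} I_{r,s,q}(α) tends to 1 as α → 0⁺. -/

import Mathlib

open Finset Polynomial Filter

/-- The discrete Coulomb-gas sum `I_{r,s,q}(α)`, viewed as a polynomial in `α`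
(with rational coefficients). -/
noncomputable def coulombPoly (r s q : ℕ) : Polynomial ℚ :=
  Polynomial.C ((1 / (Nat.factorial s : ℚ)) *
      ∏ j ∈ Finset.range s,
        (Nat.factorial q : ℚ) / ((Nat.factorial j : ℚ) * (Nat.factorial (j + q) : ℚ))) *
    ∑ m : Fin s → Fin r,
      Polynomial.C
        ((∏ p ∈ Finset.univ.filter fun p : Fin s × Fin s => p.1 < p.2,
            (((m p.1 : ℕ) : ℚ) - ((m p.2 : ℕ) : ℚ)) ^ 2) *
          ∏ j : Fin s, (Nat.choose (q + (m j : ℕ)) q : ℚ)) *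
        Polynomial.X ^ (∑ j : Fin s, (m j : ℕ))

/-- The discrete Coulomb-gas sum `I_{r,s,q}(α)` as a real function of `α`. -/
noncomputable def coulombSum (r s q : ℕ) (α : ℝ) : ℝ :=
  (1 / (Nat.factorial s : ℝ)) *
    (∏ j ∈ Finset.range s,
      (Nat.factorial q : ℝ) / ((Nat.factorial j : ℝ) * (Nat.factorial (j + q) : ℝ))) *
    ∑ m : Fin s → Fin r,
      (∏ p ∈ Finset.univ.filter fun p : Fin s × Fin s => p.1 < p.2,
          (((m p.1 : ℕ) : ℝ) - ((m p.2 : ℕ) : ℝ)) ^ 2) *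
        ∏ j : Fin s, (Nat.choose (q + (m j : ℕ)) q : ℝ) * α ^ ((m j : ℕ))

/-- The emptiness formation probability
`F_{r,s,q}(α) = (1−α)^{s(s+q)} α^{−s(s−1)/2} I_{r,s,q}(α)`. -/
noncomputable def efp (r s q : ℕ) (α : ℝ) : ℝ :=
  (1 - α) ^ (s * (s + q)) * coulombSum r s q α / α ^ (s * (s - 1) / 2)

/-! ### Auxiliary lemmas -/

section Aux

lemma strictMono_coe_le {s : ℕ} {g : Fin s → ℕ} (hg : StrictMono g) : ∀ i : Fin s, (i : ℕ) ≤ g i := by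
  intro i
  obtain ⟨n, hn⟩ := i
  induction n with
  | zero => exact Nat.zero_le _
  | succ k ih =>
    have hk : k < s := Nat.lt_of_succ_lt hn
    have h1 : g ⟨k, hk⟩ < g ⟨k+1, hn⟩ := hg (by simp [Fin.lt_def])
    have h2 := ih hk
    simp only [Fin.val_mk] at h1 h2 ⊢
    omega

lemma fin_sum_id (s : ℕ) : ∑ j : Fin s, (j : ℕ) = s * (s-1) / 2 := by
  rw [Fin.sum_univ_eq_sum_range (fun i => i) s]; exact Finset.sum_range_id s

lemma inj_sum_ge {s : ℕ} {f : Fin s → ℕ} (hf : Function.Injective f) :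
    s * (s-1) / 2 ≤ ∑ j, f j := by
  set σ := Tuple.sort f
  have hg : StrictMono (f ∘ σ) :=
    (Tuple.monotone_sort f).strictMono_of_injective (hf.comp (Equiv.injective _))
  have h1 : ∑ j : Fin s, (j : ℕ) ≤ ∑ j : Fin s, (f ∘ σ) j :=
    Finset.sum_le_sum (fun i _ => strictMono_coe_le hg i)
  have h2 : ∑ j : Fin s, (f ∘ σ) j = ∑ j, f j := Equiv.sum_comp σ f
  have h3 := fin_sum_id s
  omega

lemma inj_sum_eq_perm {s : ℕ} {f : Fin s → ℕ} (hf : Function.Injective f)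
    (hsum : ∑ j, f j = s * (s-1) / 2) :
    ∃ τ : Equiv.Perm (Fin s), ∀ j, f j = ((τ j : ℕ)) := by
  set σ := Tuple.sort f
  have hg : StrictMono (f ∘ σ) :=
    (Tuple.monotone_sort f).strictMono_of_injective (hf.comp (Equiv.injective _))
  have h2 : ∑ j : Fin s, (f ∘ σ) j = ∑ j, f j := Equiv.sum_comp σ f
  have heq : ∀ i ∈ (univ : Finset (Fin s)), (i : ℕ) = (f ∘ σ) i := by
    refine (Finset.sum_eq_sum_iff_of_le (fun i _ => strictMono_coe_le hg i)).mp ?_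
    rw [h2, hsum, fin_sum_id]
  refine ⟨σ.symm, fun j => ?_⟩
  have := (heq (σ.symm j) (mem_univ _)).symm
  simpa using this

/-- product of squared differences over ordered pairs -/
noncomputable def pairProd {s : ℕ} (f : Fin s → ℚ) : ℚ :=
  ∏ p ∈ Finset.univ.filter fun p : Fin s × Fin s => p.1 < p.2, (f p.1 - f p.2) ^ 2

lemma pairProd_nonneg {s : ℕ} (f : Fin s → ℚ) : 0 ≤ pairProd f :=
  Finset.prod_nonneg fun p _ => sq_nonneg _

lemma pairProd_eq_zero {s : ℕ} {f : Fin s → ℚ} (hf : ¬ Function.Injective f) :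
    pairProd f = 0 := by
  rw [Function.not_injective_iff] at hf
  obtain ⟨a, b, hab, hne⟩ := hf
  rcases lt_or_gt_of_ne hne with h | h
  · exact Finset.prod_eq_zero (Finset.mem_filter.mpr ⟨mem_univ (a, b), h⟩) (by simp [hab])
  · exact Finset.prod_eq_zero (Finset.mem_filter.mpr ⟨mem_univ (b, a), h⟩) (by simp [hab])

lemma neProd_eq_sq {s : ℕ} (f : Fin s → ℚ) :
    ∏ p ∈ Finset.univ.filter fun p : Fin s × Fin s => p.1 ≠ p.2, (f p.1 - f p.2) ^ 2
      = (pairProd f) ^ 2 := by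
  have hsplit : (Finset.univ.filter fun p : Fin s × Fin s => p.1 ≠ p.2)
      = (Finset.univ.filter fun p : Fin s × Fin s => p.1 < p.2) ∪
        (Finset.univ.filter fun p : Fin s × Fin s => p.2 < p.1) := by
    ext p
    simp only [mem_filter, mem_union, mem_univ, true_and]
    exact ne_iff_lt_or_gt
  have hdisj : Disjoint (Finset.univ.filter fun p : Fin s × Fin s => p.1 < p.2)
      (Finset.univ.filter fun p : Fin s × Fin s => p.2 < p.1) := by
    simp only [Finset.disjoint_filter]
    intro p _ h1 h2
    exact absurd h1 (not_lt.mpr h2.le)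
  rw [hsplit, Finset.prod_union hdisj]
  have hswap : ∏ p ∈ Finset.univ.filter fun p : Fin s × Fin s => p.2 < p.1, (f p.1 - f p.2) ^ 2
      = pairProd f := by
    unfold pairProd
    refine Finset.prod_nbij' (fun p => (p.2, p.1)) (fun p => (p.2, p.1)) ?_ ?_ ?_ ?_ ?_
    · intro p hp; simp only [mem_filter, mem_univ, true_and] at hp ⊢; exact hp
    · intro p hp; simp only [mem_filter, mem_univ, true_and] at hp ⊢; exact hp
    · intro p _; rfl
    · intro p _; rfl
    · intro p _; ring
  rw [hswap]; unfold pairProd; ring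

lemma neProd_perm {s : ℕ} (σ : Equiv.Perm (Fin s)) (f : Fin s → ℚ) :
    ∏ p ∈ Finset.univ.filter fun p : Fin s × Fin s => p.1 ≠ p.2, (f (σ p.1) - f (σ p.2)) ^ 2
      = ∏ p ∈ Finset.univ.filter fun p : Fin s × Fin s => p.1 ≠ p.2, (f p.1 - f p.2) ^ 2 := by
  refine Finset.prod_nbij' (fun p => (σ p.1, σ p.2)) (fun p => (σ.symm p.1, σ.symm p.2)) ?_ ?_ ?_ ?_ ?_
  · intro p hp; simp only [mem_filter, mem_univ, true_and] at hp ⊢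
    exact fun h => hp (σ.injective h)
  · intro p hp; simp only [mem_filter, mem_univ, true_and] at hp ⊢
    exact fun h => hp (σ.symm.injective h)
  · intro p _; simp
  · intro p _; simp
  · intro p _; simp

lemma pairProd_perm {s : ℕ} (σ : Equiv.Perm (Fin s)) :
    pairProd (fun j : Fin s => ((σ j : ℕ) : ℚ)) = pairProd (fun j : Fin s => ((j : ℕ) : ℚ)) := by
  have key : (pairProd (fun j : Fin s => ((σ j : ℕ) : ℚ)))^2
      = (pairProd (fun j : Fin s => ((j : ℕ) : ℚ)))^2 := by
    rw [← neProd_eq_sq, ← neProd_eq_sq]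
    exact neProd_perm σ (fun j : Fin s => ((j : ℕ) : ℚ))
  exact (sq_eq_sq₀ (pairProd_nonneg _) (pairProd_nonneg _)).mp key

lemma prod_range_sub (s : ℕ) : ∏ j ∈ range s, ((s : ℚ) - (j : ℚ))^2 = ((Nat.factorial s : ℚ))^2 := by
  induction s with
  | zero => simp
  | succ n ih =>
    rw [Finset.prod_range_succ']
    have h1 : ∀ j ∈ range n, (((n+1 : ℕ) : ℚ) - ((j+1 : ℕ) : ℚ))^2 = ((n : ℚ) - (j : ℚ))^2 := by
      intro j _; push_cast; ring
    rw [Finset.prod_congr rfl h1, ih, Nat.factorial_succ]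
    push_cast; ring

lemma T_eq (s : ℕ) :
    (∏ j ∈ range s, ∏ k ∈ range s, if j < k then ((j:ℚ)-(k:ℚ))^2 else 1)
      = ∏ j ∈ range s, ((Nat.factorial j : ℚ))^2 := by
  induction s with
  | zero => simp
  | succ n ih =>
    rw [Finset.prod_range_succ]
    have hlast : (∏ k ∈ range (n+1), if n < k then ((n:ℚ)-(k:ℚ))^2 else 1) = 1 := by
      apply Finset.prod_eq_one
      intro k hk
      rw [if_neg (by simp only [mem_range] at hk; omega)]
    rw [hlast, mul_one]
    have hsplit : ∀ j ∈ range n, (∏ k ∈ range (n+1), if j < k then ((j:ℚ)-(k:ℚ))^2 else 1)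
        = (∏ k ∈ range n, if j < k then ((j:ℚ)-(k:ℚ))^2 else 1) * ((j:ℚ)-(n:ℚ))^2 := by
      intro j hj
      rw [Finset.prod_range_succ, if_pos (mem_range.mp hj)]
    rw [Finset.prod_congr rfl hsplit, Finset.prod_mul_distrib, ih, Finset.prod_range_succ]
    have hl : ∏ j ∈ range n, ((j:ℚ)-(n:ℚ))^2 = ((Nat.factorial n : ℚ))^2 := by
      rw [← prod_range_sub n]
      exact Finset.prod_congr rfl (fun j _ => by ring)
    rw [hl]

lemma superfactorial (s : ℕ) :
    pairProd (fun j : Fin s => ((j : ℕ) : ℚ)) = ∏ j ∈ range s, ((Nat.factorial j : ℚ))^2 := by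
  unfold pairProd
  rw [Finset.prod_filter, Fintype.prod_prod_type, ← T_eq]
  rw [← Fin.prod_univ_eq_prod_range
    (fun j => ∏ k ∈ range s, if j < k then ((j:ℚ)-(k:ℚ))^2 else 1) s]
  apply Finset.prod_congr rfl
  intro x _
  rw [← Fin.prod_univ_eq_prod_range (fun k => if (x:ℕ) < k then (((x:ℕ):ℚ)-(k:ℚ))^2 else 1) s]
  apply Finset.prod_congr rfl
  intro y _
  simp only []
  by_cases h : x < y
  · rw [if_pos h, if_pos (Fin.lt_def.mp h)]
  · rw [if_neg h, if_neg (fun hc => h (Fin.lt_def.mpr hc))]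

lemma coulombPoly_coeff (r s q k : ℕ) :
    (coulombPoly r s q).coeff k =
      ((1 / (Nat.factorial s : ℚ)) *
        ∏ j ∈ Finset.range s,
          (Nat.factorial q : ℚ) / ((Nat.factorial j : ℚ) * (Nat.factorial (j + q) : ℚ))) *
      ∑ m : Fin s → Fin r,
        (pairProd (fun j : Fin s => ((m j : ℕ) : ℚ)) *
          ∏ j : Fin s, (Nat.choose (q + (m j : ℕ)) q : ℚ)) *
        (if k = (∑ j : Fin s, (m j : ℕ)) then 1 else 0) := by
  unfold coulombPoly
  rw [Polynomial.coeff_C_mul, Polynomial.finset_sum_coeff]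
  congr 1
  apply Finset.sum_congr rfl
  intro m _
  rw [Polynomial.coeff_C_mul, Polynomial.coeff_X_pow]
  rfl


lemma factor_one (q j : ℕ) :
    (q.factorial : ℚ)/((j.factorial:ℚ)*((j+q).factorial:ℚ)) *
      (((j.factorial:ℚ))^2 * (((q+j).choose q : ℕ) : ℚ)) = 1 := by
  have hN : (q+j).choose q * q.factorial * j.factorial = (q+j).factorial := by
    have h := Nat.choose_mul_factorial_mul_factorial (Nat.le_add_right q j)
    simpa using h
  have hQ : (((q+j).choose q : ℕ) : ℚ) * (q.factorial:ℚ) * (j.factorial:ℚ)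
      = ((q+j).factorial : ℚ) := by exact_mod_cast hN
  have h1 : (j.factorial : ℚ) ≠ 0 := Nat.cast_ne_zero.mpr j.factorial_ne_zero
  have h2 : ((j+q).factorial : ℚ) ≠ 0 := Nat.cast_ne_zero.mpr (j+q).factorial_ne_zero
  field_simp
  rw [add_comm j q]
  linear_combination hQ

lemma coeff_lt (r s q k : ℕ) (hk : k < s*(s-1)/2) : (coulombPoly r s q).coeff k = 0 := by
  rw [coulombPoly_coeff]
  rw [Finset.sum_eq_zero, mul_zero]
  intro m _
  by_cases hsum : k = ∑ j : Fin s, (m j : ℕ)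
  · have hni : ¬ Function.Injective (fun j : Fin s => ((m j : ℕ))) := by
      intro hinj
      have := inj_sum_ge hinj
      omega
    have hniQ : ¬ Function.Injective (fun j : Fin s => ((m j : ℕ) : ℚ)) := by
      intro hQ
      exact hni (fun a b hab => hQ (by simp only []; exact_mod_cast congrArg (Nat.cast : ℕ → ℚ) hab))
    rw [pairProd_eq_zero hniQ, zero_mul, zero_mul]
  · rw [if_neg hsum, mul_zero]

lemma coeff_eq_one (r s q : ℕ) (hsr : s ≤ r) :
    (coulombPoly r s q).coeff (s*(s-1)/2) = 1 := by
  classical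
  rw [coulombPoly_coeff]
  set N := s*(s-1)/2 with hN
  set F : (Fin s → Fin r) → ℚ := fun m =>
    (pairProd (fun j : Fin s => ((m j : ℕ) : ℚ)) *
      ∏ j : Fin s, (Nat.choose (q + (m j : ℕ)) q : ℚ)) *
    (if N = (∑ j : Fin s, (m j : ℕ)) then 1 else 0) with hF
  have hP : ∀ m ∈ (univ : Finset (Fin s → Fin r)), F m ≠ 0 →
      (∃ τ : Equiv.Perm (Fin s), ∀ j, (m j : ℕ) = (τ j : ℕ)) := by
    intro m _ hm
    rw [hF] at hm
    beta_reduce at hm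
    by_cases hsum : N = ∑ j : Fin s, (m j : ℕ)
    · have hpp : pairProd (fun j : Fin s => ((m j : ℕ) : ℚ)) ≠ 0 := by
        intro h0; apply hm; beta_reduce; rw [h0, zero_mul, zero_mul]
      have hQ : Function.Injective (fun j : Fin s => ((m j : ℕ) : ℚ)) := by
        by_contra hc; exact hpp (pairProd_eq_zero hc)
      have hNat : Function.Injective (fun j : Fin s => ((m j : ℕ))) := by
        intro a b hab
        exact hQ (by simp only []; exact_mod_cast congrArg (Nat.cast : ℕ → ℚ) hab)
      exact inj_sum_eq_perm hNat hsum.symm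
    · exact absurd (by beta_reduce; rw [if_neg hsum, mul_zero]) hm
  have hfilter : ∑ m : Fin s → Fin r, F m
      = ∑ m ∈ univ.filter (fun m => ∃ τ : Equiv.Perm (Fin s), ∀ j, (m j : ℕ) = (τ j : ℕ)), F m :=
    (Finset.sum_filter_of_ne hP).symm
  set ι : Equiv.Perm (Fin s) → (Fin s → Fin r) := fun σ j => Fin.castLE hsr (σ j) with hι
  have him : univ.filter (fun m => ∃ τ : Equiv.Perm (Fin s), ∀ j, (m j : ℕ) = (τ j : ℕ))
      = Finset.image ι univ := by
    ext m
    simp only [mem_filter, mem_univ, true_and, Finset.mem_image]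
    constructor
    · rintro ⟨τ, hτ⟩
      refine ⟨τ, ?_⟩
      funext j
      exact Fin.ext (by simp [hι, (hτ j).symm])
    · rintro ⟨σ, rfl⟩
      exact ⟨σ, fun j => by simp [hι]⟩
  have hinj : ∀ x ∈ (univ : Finset (Equiv.Perm (Fin s))), ∀ y ∈ univ, ι x = ι y → x = y := by
    intro x _ y _ h
    apply Equiv.ext
    intro j
    exact Fin.castLE_injective hsr (congrFun h j)
  rw [hfilter, him, Finset.sum_image hinj]
  have hterm : ∀ σ ∈ (univ : Finset (Equiv.Perm (Fin s))),
      F (ι σ) = (∏ j ∈ range s, ((Nat.factorial j : ℚ))^2) *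
        ∏ j ∈ range s, ((Nat.choose (q + j) q : ℕ) : ℚ) := by
    intro σ _
    have hval : ∀ j, ((ι σ j : ℕ)) = (σ j : ℕ) := fun j => by simp [hι]
    have hsum : ∑ j : Fin s, ((ι σ j : ℕ)) = N := by
      simp only [hval]
      rw [Equiv.sum_comp σ (fun j : Fin s => (j : ℕ)), fin_sum_id]
    have hpp : pairProd (fun j : Fin s => ((ι σ j : ℕ) : ℚ))
        = ∏ j ∈ range s, ((Nat.factorial j : ℚ))^2 := by
      have : (fun j : Fin s => ((ι σ j : ℕ) : ℚ)) = (fun j : Fin s => ((σ j : ℕ) : ℚ)) := by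
        funext j; rw [hval]
      rw [this, pairProd_perm σ, superfactorial]
    have hch : ∏ j : Fin s, (Nat.choose (q + (ι σ j : ℕ)) q : ℚ)
        = ∏ j ∈ range s, ((Nat.choose (q + j) q : ℕ) : ℚ) := by
      have h1 : ∏ j : Fin s, (Nat.choose (q + (ι σ j : ℕ)) q : ℚ)
          = ∏ j : Fin s, (Nat.choose (q + (j : ℕ)) q : ℚ) := by
        have h2 : ∀ j : Fin s, (Nat.choose (q + (ι σ j : ℕ)) q : ℚ)
            = (fun j : Fin s => (Nat.choose (q + (j : ℕ)) q : ℚ)) (σ j) := fun j => by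
          simp only [hval]
        rw [Finset.prod_congr rfl (fun j _ => h2 j)]
        exact Equiv.prod_comp σ (fun j : Fin s => (Nat.choose (q + (j : ℕ)) q : ℚ))
      rw [h1, Fin.prod_univ_eq_prod_range (fun j => (Nat.choose (q + j) q : ℚ)) s]
    rw [hF]
    simp only [hsum, if_pos rfl, mul_one, hpp, hch]
    simp
  rw [Finset.sum_congr rfl hterm, Finset.sum_const, Finset.card_univ, Fintype.card_perm,
    Fintype.card_fin, nsmul_eq_mul]
  have hs0 : ((Nat.factorial s : ℕ) : ℚ) ≠ 0 := Nat.cast_ne_zero.mpr s.factorial_ne_zero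
  have h2 : (∏ j ∈ range s, (Nat.factorial q : ℚ) / ((Nat.factorial j : ℚ) * (Nat.factorial (j + q) : ℚ))) *
      ((∏ j ∈ range s, ((Nat.factorial j : ℚ))^2) * ∏ j ∈ range s, ((Nat.choose (q + j) q : ℕ) : ℚ)) = 1 := by
    rw [← Finset.prod_mul_distrib, ← Finset.prod_mul_distrib]
    exact Finset.prod_eq_one (fun j _ => factor_one q j)
  calc (1 / (Nat.factorial s : ℚ) *
        ∏ j ∈ range s, (Nat.factorial q : ℚ) / ((Nat.factorial j : ℚ) * (Nat.factorial (j + q) : ℚ))) *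
      ((Nat.factorial s : ℚ) *
        ((∏ j ∈ range s, ((Nat.factorial j : ℚ))^2) * ∏ j ∈ range s, ((Nat.choose (q + j) q : ℕ) : ℚ)))
      = ((∏ j ∈ range s, (Nat.factorial q : ℚ) / ((Nat.factorial j : ℚ) * (Nat.factorial (j + q) : ℚ))) *
        ((∏ j ∈ range s, ((Nat.factorial j : ℚ))^2) * ∏ j ∈ range s, ((Nat.choose (q + j) q : ℕ) : ℚ))) *
        ((Nat.factorial s : ℚ) * (1 / (Nat.factorial s : ℚ))) := by ring
    _ = 1 := by rw [h2, one_mul, mul_one_div, div_self hs0]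


lemma coulombSum_eq_eval (r s q : ℕ) (α : ℝ) :
    coulombSum r s q α = ((coulombPoly r s q).map (algebraMap ℚ ℝ)).eval α := by
  unfold coulombSum coulombPoly
  rw [Polynomial.eval_map]
  simp only [Polynomial.eval₂_mul, Polynomial.eval₂_C, Polynomial.eval₂_finset_sum,
    Polynomial.eval₂_X_pow]
  congr 1
  · push_cast; ring
  · apply Finset.sum_congr rfl
    intro m _
    rw [Finset.prod_mul_distrib, Finset.prod_pow_eq_pow_sum]
    push_cast
    ring

end Aux

/-- the lowest-degree term of `I_{r,s,q}(α)` as a polynomial in `α` is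
exactly `α^{s(s−1)/2}` with coefficient 1; equivalently,
`F_{r,s,q}(α) → 1` as `α → 0⁺`. -/
theorem coulombSum_lowest_order (s r q : ℕ) (hs : 1 ≤ s) (hsr : s ≤ r) :
    (∀ k < s * (s - 1) / 2, (coulombPoly r s q).coeff k = 0) ∧
    (coulombPoly r s q).coeff (s * (s - 1) / 2) = 1 ∧
    Tendsto (fun α : ℝ => efp r s q α) (nhdsWithin 0 (Set.Ioi 0)) (nhds 1) := by
  have h1 : ∀ k < s * (s - 1) / 2, (coulombPoly r s q).coeff k = 0 :=
    fun k hk => coeff_lt r s q k hk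
  have h2 : (coulombPoly r s q).coeff (s * (s - 1) / 2) = 1 := coeff_eq_one r s q hsr
  refine ⟨h1, h2, ?_⟩
  set N := s * (s - 1) / 2 with hNdef
  set Q : Polynomial ℝ := (coulombPoly r s q).map (algebraMap ℚ ℝ) with hQ
  have hlow : ∀ d < N, Q.coeff d = 0 := by
    intro d hd
    rw [hQ, Polynomial.coeff_map, h1 d hd, map_zero]
  obtain ⟨R, hR⟩ := Polynomial.X_pow_dvd_iff.mpr hlow
  have hcoeffN : Q.coeff N = 1 := by
    rw [hQ, Polynomial.coeff_map, h2, map_one]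
  have hR0 : R.eval 0 = 1 := by
    rw [← Polynomial.coeff_zero_eq_eval_zero]
    have := Polynomial.coeff_X_pow_mul R N 0
    rw [← hR, zero_add] at this
    rw [← this, hcoeffN]
  have hcont : Continuous fun α : ℝ => (1 - α) ^ (s * (s + q)) * R.eval α :=
    ((continuous_const.sub continuous_id).pow _).mul (Polynomial.continuous R)
  have htend : Tendsto (fun α : ℝ => (1 - α) ^ (s * (s + q)) * R.eval α)
      (nhdsWithin 0 (Set.Ioi 0)) (nhds 1) := by
    have := (hcont.tendsto 0).mono_left (nhdsWithin_le_nhds (s := Set.Ioi (0:ℝ)))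
    simpa [hR0] using this
  refine htend.congr' ?_
  filter_upwards [self_mem_nhdsWithin] with α hα
  have hα0 : (0:ℝ) < α := hα
  have heval : coulombSum r s q α = α ^ N * R.eval α := by
    rw [coulombSum_eq_eval, ← hQ, hR]
    simp [Polynomial.eval_mul, Polynomial.eval_pow]
  show (1 - α) ^ (s * (s + q)) * R.eval α = efp r s q α
  unfold efp
  rw [heval]
  rw [hNdef] at *
  field_simp
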